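/- For every $\beta>0$ one has the subordination identity $e^{-\beta}=\frac{1}{2\pi}\int_0^\infty e^{-\pi\sigma\beta^2}\,e^{-\frac{1}{4\pi\sigma}}\,\sigma^{-3/2}\,d\sigma$. -/

import Mathlib

open MeasureTheory Real Set Filter

/-- The subordination identity
`e^{-β} = (1/(2π)) ∫_0^∞ e^{-πσβ²} e^{-1/(4πσ)} σ^{-3/2} dσ` for `β > 0`. -/
theorem stmt3 (β : ℝ) (hβ : 0 < β) :
    Real.exp (-β) =
      (1 / (2 * π)) *
        ∫ σ in Ioi (0 : ℝ),
          Real.exp (-(π * σ * β ^ 2)) * Real.exp (-(1 / (4 * π * σ))) * σ ^ (-(3 : ℝ) / 2) := by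
  have hπ : 0 < π := pi_pos
  set c : ℝ := Real.sqrt π with hcdef
  have hc0 : 0 < c := Real.sqrt_pos.mpr hπ
  have hc2 : c * c = π := Real.mul_self_sqrt hπ.le
  set G3 : ℝ → ℝ := fun σ =>
    Real.exp (-(π * σ * β ^ 2)) * Real.exp (-(1 / (4 * π * σ))) * σ ^ (-(3 : ℝ) / 2) with hG3def
  set G1 : ℝ → ℝ := fun σ =>
    Real.exp (-(π * σ * β ^ 2)) * Real.exp (-(1 / (4 * π * σ))) * σ ^ (-(1 : ℝ) / 2) with hG1def
  -- rpow facts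
  have P3 : ∀ σ : ℝ, 0 < σ → σ ^ (-(3:ℝ)/2) = (σ * Real.sqrt σ)⁻¹ := by
    intro σ hσ
    rw [show (-(3:ℝ)/2 : ℝ) = -(3/2) by norm_num, Real.rpow_neg hσ.le]
    congr 1
    rw [show ((3:ℝ)/2) = 1 + 1/2 by norm_num, Real.rpow_add hσ, Real.rpow_one,
      ← Real.sqrt_eq_rpow]
  have P1 : ∀ σ : ℝ, 0 < σ → σ ^ (-(1:ℝ)/2) = (Real.sqrt σ)⁻¹ := by
    intro σ hσ
    rw [show (-(1:ℝ)/2 : ℝ) = -(1/2) by norm_num, Real.rpow_neg hσ.le, ← Real.sqrt_eq_rpow]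
  have hG3nonneg : ∀ σ ∈ Ioi (0:ℝ), 0 ≤ G3 σ := fun σ hσ =>
    mul_nonneg (mul_nonneg (exp_pos _).le (exp_pos _).le) (Real.rpow_nonneg (le_of_lt hσ) _)
  have hG1nonneg : ∀ σ ∈ Ioi (0:ℝ), 0 ≤ G1 σ := fun σ hσ =>
    mul_nonneg (mul_nonneg (exp_pos _).le (exp_pos _).le) (Real.rpow_nonneg (le_of_lt hσ) _)
  ----------------------------------------------------------------
  -- Step A : inversion substitution, I = 2πβ J
  ----------------------------------------------------------------
  set a : ℝ := ((2 * π * β) ^ 2)⁻¹ with hadef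
  have ha : 0 < a := by positivity
  have hsqrta : Real.sqrt a = (2 * π * β)⁻¹ := by
    rw [hadef, Real.sqrt_inv, Real.sqrt_sq (by positivity)]
  set h : ℝ → ℝ := fun σ => a * σ⁻¹ with hhdef
  have hhderiv : ∀ σ ∈ Ioi (0:ℝ), HasDerivWithinAt h (a * (-(σ^2)⁻¹)) (Ioi 0) σ := by
    intro σ hσ
    exact ((hasDerivAt_inv (ne_of_gt hσ)).const_mul a).hasDerivWithinAt
  have hhinj : InjOn h (Ioi 0) := by
    intro x hx y hy hxy
    have := mul_left_cancel₀ (ne_of_gt ha) hxy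
    exact inv_injective this
  have hhim : h '' Ioi 0 = Ioi 0 := by
    ext y
    simp only [mem_image, mem_Ioi]
    constructor
    · rintro ⟨x, hx, rfl⟩; positivity
    · intro hy
      refine ⟨a * y⁻¹, by positivity, ?_⟩
      rw [hhdef]
      field_simp
  have stepA : (∫ σ in Ioi (0:ℝ), G3 σ) = (2 * π * β) * ∫ σ in Ioi (0:ℝ), G1 σ := by
    have := integral_image_eq_integral_abs_deriv_smul (f' := fun σ => a * (-(σ^2)⁻¹))
      measurableSet_Ioi hhderiv hhinj G3
    rw [hhim] at this
    rw [this, ← MeasureTheory.integral_const_mul]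
    apply setIntegral_congr_fun measurableSet_Ioi
    intro σ hσ
    have hσ' : (0:ℝ) < σ := hσ
    have hs : 0 < Real.sqrt σ := Real.sqrt_pos.mpr hσ'
    have hss : Real.sqrt σ * Real.sqrt σ = σ := Real.mul_self_sqrt hσ'.le
    have haσ : 0 < a * σ⁻¹ := by positivity
    have habs : |a * (-(σ^2)⁻¹)| = a * (σ^2)⁻¹ := by
      rw [show a * (-(σ^2)⁻¹) = -(a * (σ^2)⁻¹) by ring, abs_neg, abs_of_pos (by positivity)]
    have hexp1 : π * (a * σ⁻¹) * β ^ 2 = 1 / (4 * π * σ) := by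
      rw [hadef]; field_simp; ring
    have hexp2 : 1 / (4 * π * (a * σ⁻¹)) = π * σ * β ^ 2 := by
      rw [hadef]; field_simp; ring
    have hsqrt : Real.sqrt (a * σ⁻¹) = (2 * π * β)⁻¹ * (Real.sqrt σ)⁻¹ := by
      rw [Real.sqrt_mul ha.le, hsqrta, Real.sqrt_inv]
    simp only [smul_eq_mul, hG3def, hG1def]
    rw [habs, hexp1, hexp2, P3 _ haσ, P1 _ hσ', hsqrt]
    set s := Real.sqrt σ with hsdef
    rw [← hss]
    have hπβ : (0:ℝ) < 2 * π * β := by positivity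
    rw [hadef]
    field_simp
  ----------------------------------------------------------------
  -- Step B : main substitution
  ----------------------------------------------------------------
  set f : ℝ → ℝ := fun σ => c * β * Real.sqrt σ - (2*c)⁻¹ * (Real.sqrt σ)⁻¹ with hfdef
  set f' : ℝ → ℝ := fun σ =>
    c * β * (1 / (2 * Real.sqrt σ)) - (2*c)⁻¹ * (-(1 / (2 * Real.sqrt σ)) / (Real.sqrt σ)^2)
    with hf'def
  have hfderiv : ∀ σ ∈ Ioi (0:ℝ), HasDerivWithinAt f (f' σ) (Ioi 0) σ := by
    intro σ hσ
    have hσ' : (0:ℝ) < σ := hσ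
    have h1 : HasDerivAt Real.sqrt (1 / (2 * Real.sqrt σ)) σ := Real.hasDerivAt_sqrt hσ'.ne'
    have h2 : HasDerivAt (fun x => (Real.sqrt x)⁻¹)
        (-(1 / (2 * Real.sqrt σ)) / (Real.sqrt σ)^2) σ :=
      h1.inv (Real.sqrt_pos.mpr hσ').ne'
    exact ((h1.const_mul (c * β)).sub (h2.const_mul (2*c)⁻¹)).hasDerivWithinAt
  have hfinj : InjOn f (Ioi 0) := by
    apply StrictMonoOn.injOn
    intro x hx y hy hxy
    have hx' : (0:ℝ) < x := hx
    have hy' : (0:ℝ) < y := hy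
    have hsx : 0 < Real.sqrt x := Real.sqrt_pos.mpr hx'
    have hsy : 0 < Real.sqrt y := Real.sqrt_pos.mpr hy'
    have hxy' : Real.sqrt x < Real.sqrt y := Real.sqrt_lt_sqrt hx'.le hxy
    have t1 : c * β * Real.sqrt x < c * β * Real.sqrt y := by
      apply mul_lt_mul_of_pos_left hxy' (by positivity)
    have t2 : (Real.sqrt y)⁻¹ < (Real.sqrt x)⁻¹ := by
      exact inv_strictAnti₀ hsx hxy'
    have t3 : (2*c)⁻¹ * (Real.sqrt y)⁻¹ < (2*c)⁻¹ * (Real.sqrt x)⁻¹ :=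
      mul_lt_mul_of_pos_left t2 (by positivity)
    simp only [hfdef]
    linarith
  have hfim : f '' Ioi 0 = univ := by
    apply eq_univ_of_univ_subset
    have hsq0 : Tendsto Real.sqrt (nhdsWithin 0 (Ioi 0)) (nhdsWithin 0 (Ioi 0)) := by
      apply tendsto_nhdsWithin_of_tendsto_nhds_of_eventually_within
      · simpa using (Real.continuous_sqrt.tendsto 0).mono_left nhdsWithin_le_nhds
      · filter_upwards [self_mem_nhdsWithin] with x hx using Real.sqrt_pos.mpr hx
    have hsqT : Tendsto Real.sqrt atTop atTop := by
      simp only [funext Real.sqrt_eq_rpow]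
      exact tendsto_rpow_atTop (by norm_num)
    have hcont : ContinuousOn f (Ioi 0) := by
      apply ContinuousOn.sub
      · exact continuousOn_const.mul Real.continuous_sqrt.continuousOn
      · exact continuousOn_const.mul (Real.continuous_sqrt.continuousOn.inv₀
          fun x hx => (Real.sqrt_pos.mpr hx).ne')
    have hbot : Tendsto f (nhdsWithin 0 (Ioi 0)) atBot := by
      apply Filter.Tendsto.add_atBot (C := 0)
      · exact (Continuous.tendsto' (f := fun x : ℝ => c * β * Real.sqrt x)
          (continuous_const.mul Real.continuous_sqrt) 0 0 (by simp)).mono_left nhdsWithin_le_nhds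
      · have : Tendsto (fun σ => (Real.sqrt σ)⁻¹) (nhdsWithin 0 (Ioi 0)) atTop :=
          tendsto_inv_nhdsGT_zero.comp hsq0
        have := this.const_mul_atTop (show (0:ℝ) < (2*c)⁻¹ by positivity)
        exact tendsto_neg_atBot_iff.mpr this |>.congr (fun x => by ring)
    have htop : Tendsto f atTop atTop := by
      apply Filter.Tendsto.atTop_add (C := 0)
      · exact (hsqT.const_mul_atTop (show (0:ℝ) < c * β by positivity))
      · have : Tendsto (fun σ => (Real.sqrt σ)⁻¹) atTop (nhds 0) :=
          tendsto_inv_atTop_zero.comp hsqT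
        have := this.const_mul (2*c)⁻¹
        simpa using this.neg.congr (fun x => by ring)
    exact isPreconnected_Ioi.intermediate_value_Iii (l₁ := nhdsWithin 0 (Ioi 0))
      (l₂ := atTop) inf_le_right (le_principal_iff.mpr (Ioi_mem_atTop 0))
      hcont hbot htop
  -- value of f' and positivity
  have hf'eq : ∀ σ ∈ Ioi (0:ℝ),
      f' σ = c*β/2 * (Real.sqrt σ)⁻¹ + (4*c)⁻¹ * (σ * Real.sqrt σ)⁻¹ := by
    intro σ hσ
    have hσ' : (0:ℝ) < σ := hσ
    obtain ⟨s, hs0, rfl⟩ : ∃ s : ℝ, 0 < s ∧ σ = s * s :=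
      ⟨Real.sqrt σ, Real.sqrt_pos.mpr hσ', (Real.mul_self_sqrt hσ'.le).symm⟩
    simp only [hf'def, Real.sqrt_mul_self hs0.le]
    field_simp
    ring
  have hsq : ∀ σ ∈ Ioi (0:ℝ), (f σ)^2 = π * σ * β^2 + 1/(4*π*σ) - β := by
    intro σ hσ
    have hσ' : (0:ℝ) < σ := hσ
    obtain ⟨s, hs0, rfl⟩ : ∃ s : ℝ, 0 < s ∧ σ = s * s :=
      ⟨Real.sqrt σ, Real.sqrt_pos.mpr hσ', (Real.mul_self_sqrt hσ'.le).symm⟩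
    simp only [hfdef, Real.sqrt_mul_self hs0.le]
    rw [← hc2]
    field_simp
    ring
  -- pointwise identity for the main substitution
  have hpt : ∀ σ ∈ Ioi (0:ℝ), |f' σ| • Real.exp (-(f σ)^2)
      = Real.exp β * (c*β/2 * G1 σ + (4*c)⁻¹ * G3 σ) := by
    intro σ hσ
    have hσ' : (0:ℝ) < σ := hσ
    have hs : 0 < Real.sqrt σ := Real.sqrt_pos.mpr hσ'
    have hexp : Real.exp (-(f σ)^2)
        = Real.exp β * (Real.exp (-(π * σ * β ^ 2)) * Real.exp (-(1 / (4 * π * σ)))) := by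
      rw [← Real.exp_add, ← Real.exp_add]
      congr 1
      have h2 := hsq σ hσ
      linarith
    have hpos : 0 < c*β/2 * (Real.sqrt σ)⁻¹ + (4*c)⁻¹ * (σ * Real.sqrt σ)⁻¹ :=
      add_pos (mul_pos (by positivity) (inv_pos.mpr hs))
        (mul_pos (by positivity) (inv_pos.mpr (mul_pos hσ' hs)))
    rw [smul_eq_mul, hf'eq σ hσ, abs_of_pos hpos, hexp]
    simp only [hG1def, hG3def]
    rw [P1 _ hσ', P3 _ hσ']
    ring
  -- the main substitution identity
  have hMain : c = ∫ σ in Ioi (0:ℝ), Real.exp β * (c*β/2 * G1 σ + (4*c)⁻¹ * G3 σ) := by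
    have hg := integral_image_eq_integral_abs_deriv_smul (f' := f')
      measurableSet_Ioi hfderiv hfinj (fun x => Real.exp (-x^2))
    rw [hfim, setIntegral_univ] at hg
    have hgauss : (∫ x : ℝ, Real.exp (-x^2)) = c := by
      have h0 := integral_gaussian 1
      simp only [neg_mul, one_mul, div_one] at h0
      rw [hcdef]
      exact h0
    rw [hgauss] at hg
    refine hg.trans ?_
    exact setIntegral_congr_fun measurableSet_Ioi hpt
  -- continuity of G1, G3 on Ioi 0
  have hcontE : ContinuousOn
      (fun σ : ℝ => Real.exp (-(π * σ * β ^ 2)) * Real.exp (-(1 / (4 * π * σ)))) (Ioi 0) := by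
    apply ContinuousOn.mul
    · exact (Real.continuous_exp.comp
        (((continuous_const.mul continuous_id).mul continuous_const).neg)).continuousOn
    · apply Real.continuous_exp.comp_continuousOn
      apply ContinuousOn.neg
      apply ContinuousOn.div continuousOn_const
      · exact (continuous_const.mul continuous_id).continuousOn
      · intro x hx
        have hx' : (0:ℝ) < x := hx
        exact (mul_pos (by positivity) hx').ne'
  have hrpow : ∀ p : ℝ, ContinuousOn (fun σ : ℝ => σ ^ p) (Ioi 0) := fun p =>
    ContinuousOn.rpow_const continuousOn_id (fun x hx => Or.inl (ne_of_gt hx))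
  have hcontG3 : ContinuousOn G3 (Ioi 0) := hcontE.mul (hrpow _)
  have hcontG1 : ContinuousOn G1 (Ioi 0) := hcontE.mul (hrpow _)
  -- integrability
  have hIntK : IntegrableOn
      (fun σ => Real.exp β * (c*β/2 * G1 σ + (4*c)⁻¹ * G3 σ)) (Ioi 0) := by
    have hbase : IntegrableOn (fun σ => |f' σ| • Real.exp (-(f σ)^2)) (Ioi 0) := by
      apply (integrableOn_image_iff_integrableOn_abs_deriv_smul
        measurableSet_Ioi hfderiv hfinj (fun x => Real.exp (-x^2))).mp
      rw [hfim]
      have : Integrable (fun x : ℝ => Real.exp (-x^2)) := by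
        have := integrable_exp_neg_mul_sq (one_pos (α := ℝ))
        simpa using this
      exact this.integrableOn
    exact hbase.congr_fun hpt measurableSet_Ioi
  have hIntG3 : IntegrableOn G3 (Ioi 0) := by
    apply Integrable.mono' (hIntK.const_mul ((4*c) * Real.exp (-β)))
      (hcontG3.aestronglyMeasurable measurableSet_Ioi)
    rw [ae_restrict_iff' measurableSet_Ioi]
    apply Filter.Eventually.of_forall
    intro σ hσ
    have key : (4*c*Real.exp (-β)) * (Real.exp β * (c*β/2 * G1 σ + (4*c)⁻¹ * G3 σ))
        = (4*c) * (c*β/2) * G1 σ + G3 σ := by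
      rw [Real.exp_neg]
      field_simp
    calc ‖G3 σ‖ = G3 σ := by rw [Real.norm_eq_abs, abs_of_nonneg (hG3nonneg σ hσ)]
      _ ≤ (4*c) * (c*β/2) * G1 σ + G3 σ :=
          le_add_of_nonneg_left (mul_nonneg (by positivity) (hG1nonneg σ hσ))
      _ = (4*c*Real.exp (-β)) * (Real.exp β * (c*β/2 * G1 σ + (4*c)⁻¹ * G3 σ)) := key.symm
  have hIntG1 : IntegrableOn G1 (Ioi 0) := by
    apply Integrable.mono' (hIntK.const_mul ((2/(c*β)) * Real.exp (-β)))
      (hcontG1.aestronglyMeasurable measurableSet_Ioi)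
    rw [ae_restrict_iff' measurableSet_Ioi]
    apply Filter.Eventually.of_forall
    intro σ hσ
    have key : ((2/(c*β))*Real.exp (-β)) * (Real.exp β * (c*β/2 * G1 σ + (4*c)⁻¹ * G3 σ))
        = G1 σ + (2/(c*β)) * (4*c)⁻¹ * G3 σ := by
      rw [Real.exp_neg]
      field_simp
    calc ‖G1 σ‖ = G1 σ := by rw [Real.norm_eq_abs, abs_of_nonneg (hG1nonneg σ hσ)]
      _ ≤ G1 σ + (2/(c*β)) * (4*c)⁻¹ * G3 σ :=
          le_add_of_nonneg_right (mul_nonneg (by positivity) (hG3nonneg σ hσ))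
      _ = ((2/(c*β))*Real.exp (-β)) * (Real.exp β * (c*β/2 * G1 σ + (4*c)⁻¹ * G3 σ)) := key.symm
  -- split the integral
  have hsplit : (∫ σ in Ioi (0:ℝ), Real.exp β * (c*β/2 * G1 σ + (4*c)⁻¹ * G3 σ))
      = Real.exp β * (c*β/2 * (∫ σ in Ioi (0:ℝ), G1 σ) + (4*c)⁻¹ * ∫ σ in Ioi (0:ℝ), G3 σ) := by
    rw [MeasureTheory.integral_const_mul]
    congr 1
    rw [integral_add (hIntG1.const_mul _) (hIntG3.const_mul _),
      MeasureTheory.integral_const_mul, MeasureTheory.integral_const_mul]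
  rw [hsplit] at hMain
  set I := ∫ σ in Ioi (0:ℝ), G3 σ with hIdef
  set J := ∫ σ in Ioi (0:ℝ), G1 σ with hJdef
  -- final arithmetic
  rw [stepA] at hMain
  rw [← hc2] at hMain
  have h1 : Real.exp β * (c*β/2 * J + (4*c)⁻¹ * (2 * (c*c) * β * J))
      = c * (Real.exp β * β * J) := by
    field_simp
    ring
  have h2 : c * 1 = c * (Real.exp β * β * J) := by
    rw [mul_one, ← h1, ← hMain]
  have h3 : 1 = Real.exp β * β * J := mul_left_cancel₀ hc0.ne' h2
  have h4 : Real.exp (-β) = β * J := by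
    have hee : Real.exp (-β) * Real.exp β = 1 := by rw [← Real.exp_add]; simp
    calc Real.exp (-β) = Real.exp (-β) * 1 := (mul_one _).symm
      _ = Real.exp (-β) * (Real.exp β * β * J) := by rw [← h3]
      _ = β * J := by linear_combination (β * J) * hee
  rw [stepA, h4]
  field_simp
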